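/- arXiv:1112.5532 — 3 statements merged into one kernel-verified Lean document; each statement's English description precedes it below -/
import Mathlib

section
/- Let P_k and \hat P_k, k ≥ 0, be biorthonormal families of polynomials of degree k on the unit circle with respect to a weight ρ, i.e. (1/2πi)∮ P_j(z)\hat P_k(z^{-1})ρ(z)dz/z = δ_{jk}. Then the Christoffel–Darboux identity holds: Σ_{k=0}^{M-1} \hat P_k(z^{-1})P_k(w) = [z^{-M}P_M(z)·w^M \hat P_M(w^{-1}) − \hat P_M(z^{-1})P_M(w)] / (1 − w/z). -/
open Complex MeasureTheory

section CdxAux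
open Matrix

lemma cdx_circleIntegral_finset_sum {ι : Type*} (s : Finset ι) (f : ι → ℂ → ℂ)
    (h : ∀ i ∈ s, CircleIntegrable (f i) 0 1) :
    (∮ z in C(0, 1), ∑ i ∈ s, f i z) = ∑ i ∈ s, ∮ z in C(0, 1), f i z := by
  simp only [circleIntegral]
  rw [← intervalIntegral.integral_finset_sum (fun i hi => (h i hi).out)]
  congr 1; funext θ; rw [Finset.smul_sum]

lemma cdx_circleIntegrable_cont_mul (g : ℂ → ℂ) (ρ₀ : ℂ → ℂ)
    (hg : ContinuousOn g (Metric.sphere (0:ℂ) 1))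
    (hρ : CircleIntegrable ρ₀ 0 1) :
    CircleIntegrable (fun z => g z * ρ₀ z) 0 1 := by
  have hcont : ContinuousOn (fun θ : ℝ => g (circleMap 0 1 θ)) (Set.uIcc 0 (2 * Real.pi)) := by
    apply (hg.comp (continuous_circleMap 0 1).continuousOn ?_).mono (Set.subset_univ _) |>.mono
      (Set.subset_univ _)
    intro θ _
    simpa using circleMap_mem_sphere (0:ℂ) zero_le_one θ
  exact hρ.continuousOn_mul (by simpa using hg)


/-- If `U * T * Vᵀ = 1` and `T` is persymmetric, then `S := Vᵀ * U` (which is a two-sided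
inverse of `T`) is persymmetric. -/
lemma persym_inv {N : ℕ} (T U V : Matrix (Fin N) (Fin N) ℂ)
    (h1 : U * T * Vᵀ = 1) (hT : T.submatrix Fin.rev Fin.rev = Tᵀ) :
    (Vᵀ * U).submatrix Fin.rev Fin.rev = (Vᵀ * U)ᵀ := by
  set S := Vᵀ * U with hS
  have hTS : T * S = 1 := by
    have := (mul_eq_one_comm).mp (by rw [Matrix.mul_assoc] at h1; exact h1)
    rw [Matrix.mul_assoc] at this; exact this
  have hST : S * T = 1 := by
    have h1' : Vᵀ * (U * T) = 1 := (mul_eq_one_comm).mp h1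
    rw [← Matrix.mul_assoc] at h1'; exact h1'
  -- transposes
  have hTS' : Sᵀ * Tᵀ = 1 := by rw [← Matrix.transpose_mul, hTS, Matrix.transpose_one]
  have hcoe : (Fin.rev : Fin N → Fin N) = ⇑(Fin.revPerm (n := N)) := rfl
  -- flipped
  have hflip : Tᵀ * (S.submatrix Fin.rev Fin.rev) = 1 := by
    rw [← hT, hcoe, Matrix.submatrix_mul_equiv, hTS, Matrix.submatrix_one_equiv]
  calc S.submatrix Fin.rev Fin.rev
      = 1 * S.submatrix Fin.rev Fin.rev := by rw [Matrix.one_mul]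
    _ = Sᵀ * (Tᵀ * S.submatrix Fin.rev Fin.rev) := by rw [← Matrix.mul_assoc, hTS']
    _ = Sᵀ := by rw [hflip, Matrix.mul_one]

noncomputable def cdxMom (ρ : ℂ → ℂ) (a b : ℕ) : ℂ :=
  ∮ z in C(0,1), z ^ a * (z⁻¹) ^ b * (ρ z * z⁻¹)

lemma cdx_sphere_ne_zero {x : ℂ} (hx : x ∈ Metric.sphere (0:ℂ) 1) : x ≠ 0 := by
  intro h; rw [h] at hx; simp at hx

lemma cdxMom_integrable {ρ : ℂ → ℂ} (hρ : CircleIntegrable (fun z => ρ z * z⁻¹) 0 1)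
    (a b : ℕ) : CircleIntegrable (fun z => z ^ a * (z⁻¹) ^ b * (ρ z * z⁻¹)) 0 1 := by
  apply cdx_circleIntegrable_cont_mul _ _ _ hρ
  exact ((continuousOn_id.pow a).mul ((continuousOn_id.inv₀
    (fun x hx => cdx_sphere_ne_zero hx)).pow b))

lemma cdxMom_shift (ρ : ℂ → ℂ) (a b c d : ℕ) (h : a + d = c + b) :
    cdxMom ρ a b = cdxMom ρ c d := by
  unfold cdxMom
  apply circleIntegral.integral_congr zero_le_one
  intro x hx
  have hx0 : x ≠ 0 := cdx_sphere_ne_zero hx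
  have : x ^ a * (x⁻¹) ^ b = x ^ c * (x⁻¹) ^ d := by
    have hbd : x ^ b ≠ 0 := pow_ne_zero _ hx0
    have hdd : x ^ d ≠ 0 := pow_ne_zero _ hx0
    field_simp
    rw [one_div, inv_pow, inv_pow, ← div_eq_mul_inv, ← div_eq_mul_inv, div_eq_div_iff hbd hdd,
      ← pow_add, ← pow_add, h]
  simp only [this]

lemma cdx_expand {ρ : ℂ → ℂ} (hρ : CircleIntegrable (fun z => ρ z * z⁻¹) 0 1)
    (f g : Polynomial ℂ) (N : ℕ) (hf : f.natDegree < N) (hg : g.natDegree < N) :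
    (∮ z in C(0,1), f.eval z * g.eval z⁻¹ * (ρ z * z⁻¹))
      = ∑ a ∈ Finset.range N, ∑ b ∈ Finset.range N,
          f.coeff a * g.coeff b * cdxMom ρ a b := by
  have key : (fun z : ℂ => f.eval z * g.eval z⁻¹ * (ρ z * z⁻¹))
      = fun z => ∑ p ∈ Finset.range N ×ˢ Finset.range N,
          (f.coeff p.1 * g.coeff p.2) * (z ^ p.1 * (z⁻¹) ^ p.2 * (ρ z * z⁻¹)) := by
    funext zz
    rw [Polynomial.eval_eq_sum_range' hf, Polynomial.eval_eq_sum_range' hg,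
      Finset.sum_mul_sum, Finset.sum_product, Finset.sum_mul]
    apply Finset.sum_congr rfl; intro a _
    rw [Finset.sum_mul]
    apply Finset.sum_congr rfl; intro b _
    ring
  have hint : ∀ p ∈ Finset.range N ×ˢ Finset.range N, CircleIntegrable
      (fun z : ℂ => (f.coeff p.1 * g.coeff p.2) * (z ^ p.1 * (z⁻¹) ^ p.2 * (ρ z * z⁻¹))) 0 1 := by
    intro p _
    exact IntervalIntegrable.const_mul (cdxMom_integrable hρ p.1 p.2) _
  rw [key, cdx_circleIntegral_finset_sum _ _ hint, Finset.sum_product]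
  apply Finset.sum_congr rfl; intro a _
  apply Finset.sum_congr rfl; intro b _
  rw [circleIntegral.integral_const_mul]
  rfl

lemma cdx_weight_integrable {ρ : ℂ → ℂ} {P Phat : ℕ → Polynomial ℂ}
    (hdegP : ∀ k, (P k).degree = (k : ℕ))
    (hdegPhat : ∀ k, (Phat k).degree = (k : ℕ))
    (horth : ∀ j k : ℕ,
      (2 * Real.pi * Complex.I)⁻¹ *
          (∮ z in C(0, 1), (P j).eval z * (Phat k).eval z⁻¹ * ρ z * z⁻¹)
        = if j = k then 1 else 0) :
    CircleIntegrable (fun z => ρ z * z⁻¹) 0 1 := by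
  have h00 := horth 0 0
  rw [if_pos rfl] at h00
  set F := fun z : ℂ => (P 0).eval z * (Phat 0).eval z⁻¹ * ρ z * z⁻¹ with hFdef
  have hF : CircleIntegrable F 0 1 := by
    by_contra hF
    rw [circleIntegral.integral_undef hF] at h00
    simp at h00
  have hP0 : P 0 = Polynomial.C ((P 0).coeff 0) :=
    Polynomial.eq_C_of_degree_le_zero (by rw [hdegP 0]; simp)
  have hPh0 : Phat 0 = Polynomial.C ((Phat 0).coeff 0) :=
    Polynomial.eq_C_of_degree_le_zero (by rw [hdegPhat 0]; simp)
  have ha : (P 0).coeff 0 ≠ 0 := Polynomial.coeff_ne_zero_of_eq_degree (hdegP 0)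
  have hb : (Phat 0).coeff 0 ≠ 0 :=
    Polynomial.coeff_ne_zero_of_eq_degree (hdegPhat 0)
  have key : (fun θ : ℝ => (((P 0).coeff 0 * (Phat 0).coeff 0)⁻¹) * F (circleMap 0 1 θ))
      = fun θ : ℝ => ρ (circleMap 0 1 θ) * (circleMap 0 1 θ)⁻¹ := by
    funext θ
    rw [hFdef]
    simp only []
    rw [hP0, hPh0]
    simp only [Polynomial.eval_C, Polynomial.coeff_C_zero]
    field_simp
  have := IntervalIntegrable.const_mul (hF : IntervalIntegrable _ _ _ _)
    (((P 0).coeff 0 * (Phat 0).coeff 0)⁻¹)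
  rw [key] at this
  exact this

lemma cdx_sum_swap {N : ℕ} (c : ℂ) (F G : ℕ → ℂ) (Mo : ℕ → ℕ → ℂ) :
    (∑ b : Fin N, (∑ a : Fin N, F (a:ℕ) * (c * Mo (a:ℕ) (b:ℕ))) * G (b:ℕ))
      = c * ∑ a ∈ Finset.range N, ∑ b ∈ Finset.range N, F a * G b * Mo a b := by
  have step1 : (∑ b : Fin N, (∑ a : Fin N, F (a:ℕ) * (c * Mo (a:ℕ) (b:ℕ))) * G (b:ℕ))
      = ∑ a : Fin N, ∑ b : Fin N, F (a:ℕ) * (c * Mo (a:ℕ) (b:ℕ)) * G (b:ℕ) := by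
    rw [Finset.sum_comm]
    exact Finset.sum_congr rfl fun b _ => Finset.sum_mul _ _ _
  rw [step1]
  have step2 : ∀ a : Fin N, (∑ b : Fin N, F (a:ℕ) * (c * Mo (a:ℕ) (b:ℕ)) * G (b:ℕ))
      = c * ∑ b ∈ Finset.range N, F (a:ℕ) * G b * Mo (a:ℕ) b := by
    intro a
    rw [Finset.mul_sum, ← Fin.sum_univ_eq_sum_range
      (fun b => c * (F (a:ℕ) * G b * Mo (a:ℕ) b)) N]
    exact Finset.sum_congr rfl fun b _ => by ring
  rw [Finset.sum_congr rfl fun a _ => step2 a, Finset.mul_sum,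
    ← Fin.sum_univ_eq_sum_range (fun a => c * ∑ b ∈ Finset.range N, F a * G b * Mo a b) N]

lemma cdx_biorth_matrix {ρ : ℂ → ℂ} {P Phat : ℕ → Polynomial ℂ}
    (hρ : CircleIntegrable (fun z => ρ z * z⁻¹) 0 1)
    (hdegP : ∀ k, (P k).degree = (k : ℕ))
    (hdegPhat : ∀ k, (Phat k).degree = (k : ℕ))
    (horth : ∀ j k : ℕ,
      (2 * Real.pi * Complex.I)⁻¹ *
          (∮ z in C(0, 1), (P j).eval z * (Phat k).eval z⁻¹ * ρ z * z⁻¹)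
        = if j = k then 1 else 0) (N : ℕ) :
    (Matrix.of fun (k j : Fin N) => (P (k:ℕ)).coeff j) *
      (Matrix.of fun (a b : Fin N) => (2 * Real.pi * Complex.I)⁻¹ * cdxMom ρ a b) *
      (Matrix.of fun (k i : Fin N) => (Phat (k:ℕ)).coeff i)ᵀ = 1 := by
  ext j k
  simp only [Matrix.mul_apply, Matrix.transpose_apply, Matrix.of_apply, Matrix.one_apply]
  have hj : (P (j:ℕ)).natDegree < N :=
    lt_of_le_of_lt (le_of_eq (Polynomial.natDegree_eq_of_degree_eq_some (hdegP j))) j.isLt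
  have hk : (Phat (k:ℕ)).natDegree < N :=
    lt_of_le_of_lt (le_of_eq (Polynomial.natDegree_eq_of_degree_eq_some (hdegPhat k))) k.isLt
  have horth' := horth j k
  have hmulassoc : (fun z : ℂ => (P (j:ℕ)).eval z * (Phat (k:ℕ)).eval z⁻¹ * ρ z * z⁻¹)
      = fun z : ℂ => (P (j:ℕ)).eval z * (Phat (k:ℕ)).eval z⁻¹ * (ρ z * z⁻¹) := by
    funext zz; ring
  rw [hmulassoc, cdx_expand hρ _ _ N hj hk] at horth'
  have : (if (j:ℕ) = (k:ℕ) then (1:ℂ) else 0) = if j = k then 1 else 0 := by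
    simp [Fin.val_eq_val]
  rw [this] at horth'
  rw [← horth']
  exact cdx_sum_swap _ _ _ _

noncomputable def cdxS (P Phat : ℕ → Polynomial ℂ) (N : ℕ) : Matrix (Fin N) (Fin N) ℂ :=
  (Matrix.of fun (k i : Fin N) => (Phat (k:ℕ)).coeff i)ᵀ *
    (Matrix.of fun (k j : Fin N) => (P (k:ℕ)).coeff j)

lemma cdxS_apply (P Phat : ℕ → Polynomial ℂ) (N : ℕ) (i j : Fin N) :
    cdxS P Phat N i j = ∑ k : Fin N, (Phat (k:ℕ)).coeff i * (P (k:ℕ)).coeff j := by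
  simp [cdxS, Matrix.mul_apply]

lemma cdxS_persym {ρ : ℂ → ℂ} {P Phat : ℕ → Polynomial ℂ}
    (hρ : CircleIntegrable (fun z => ρ z * z⁻¹) 0 1)
    (hdegP : ∀ k, (P k).degree = (k : ℕ))
    (hdegPhat : ∀ k, (Phat k).degree = (k : ℕ))
    (horth : ∀ j k : ℕ,
      (2 * Real.pi * Complex.I)⁻¹ *
          (∮ z in C(0, 1), (P j).eval z * (Phat k).eval z⁻¹ * ρ z * z⁻¹)
        = if j = k then 1 else 0) (N : ℕ) (a b : Fin N) :
    cdxS P Phat N a.rev b.rev = cdxS P Phat N b a := by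
  have hT : (Matrix.of fun (a b : Fin N) =>
      (2 * Real.pi * Complex.I)⁻¹ * cdxMom ρ a b).submatrix Fin.rev Fin.rev
      = (Matrix.of fun (a b : Fin N) => (2 * Real.pi * Complex.I)⁻¹ * cdxMom ρ a b)ᵀ := by
    ext x y
    simp only [Matrix.submatrix_apply, Matrix.transpose_apply, Matrix.of_apply]
    congr 1
    apply cdxMom_shift
    have hx := x.isLt; have hy := y.isLt
    rw [Fin.val_rev, Fin.val_rev]
    omega
  have h := persym_inv _ _ _ (cdx_biorth_matrix hρ hdegP hdegPhat horth N) hT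
  have := congrFun (congrFun h a) b
  simpa [cdxS] using this

lemma cdx_pow_sub {x : ℂ} (hx : x ≠ 0) {i n : ℕ} (h : i ≤ n) :
    x ^ (n - i) = x ^ n * (x⁻¹) ^ i := by
  rw [inv_pow, eq_comm, mul_inv_eq_iff_eq_mul₀ (pow_ne_zero _ hx), ← pow_add]
  congr 1; omega

lemma cdx_kernel_expand {P Phat : ℕ → Polynomial ℂ}
    (hdegP : ∀ k, (P k).degree = (k : ℕ))
    (hdegPhat : ∀ k, (Phat k).degree = (k : ℕ)) (N : ℕ) (z w : ℂ) :
    (∑ k ∈ Finset.range N, (Phat k).eval z⁻¹ * (P k).eval w)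
      = ∑ i : Fin N, ∑ j : Fin N, cdxS P Phat N i j * ((z⁻¹) ^ (i:ℕ) * w ^ (j:ℕ)) := by
  rw [← Fin.sum_univ_eq_sum_range (fun k => (Phat k).eval z⁻¹ * (P k).eval w) N]
  have step1 : ∀ k : Fin N, (Phat (k:ℕ)).eval z⁻¹ * (P (k:ℕ)).eval w
      = ∑ i : Fin N, ∑ j : Fin N,
          (Phat (k:ℕ)).coeff i * (P (k:ℕ)).coeff j * ((z⁻¹) ^ (i:ℕ) * w ^ (j:ℕ)) := by
    intro k
    have hk1 : (Phat (k:ℕ)).natDegree < N :=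
      lt_of_le_of_lt (le_of_eq (Polynomial.natDegree_eq_of_degree_eq_some (hdegPhat k))) k.isLt
    have hk2 : (P (k:ℕ)).natDegree < N :=
      lt_of_le_of_lt (le_of_eq (Polynomial.natDegree_eq_of_degree_eq_some (hdegP k))) k.isLt
    rw [Polynomial.eval_eq_sum_range' hk1, Polynomial.eval_eq_sum_range' hk2,
      Finset.sum_mul_sum]
    rw [← Fin.sum_univ_eq_sum_range (fun i => ∑ j ∈ Finset.range N,
      (Phat (k:ℕ)).coeff i * z⁻¹ ^ i * ((P (k:ℕ)).coeff j * w ^ j)) N]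
    apply Finset.sum_congr rfl; intro i _
    rw [← Fin.sum_univ_eq_sum_range (fun j =>
      (Phat (k:ℕ)).coeff (i:ℕ) * z⁻¹ ^ (i:ℕ) * ((P (k:ℕ)).coeff j * w ^ j)) N]
    apply Finset.sum_congr rfl; intro j _
    ring
  rw [Finset.sum_congr rfl fun k _ => step1 k]
  rw [Finset.sum_comm]
  apply Finset.sum_congr rfl; intro i _
  rw [Finset.sum_comm]
  apply Finset.sum_congr rfl; intro j _
  rw [cdxS_apply, Finset.sum_mul]

lemma cdx_rev_sum {n : ℕ} (f : Fin n → ℂ) : (∑ i : Fin n, f i.rev) = ∑ i : Fin n, f i := by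
  have := Equiv.sum_comp (Fin.revPerm (n := n)) f
  simpa using this


end CdxAux

/-- Christoffel–Darboux formula for biorthonormal polynomials on the unit circle:
if `P_k`, `P̂_k` are polynomials of degree `k` with
`(1/2πi)∮ P_j(z) P̂_k(z⁻¹) ρ(z) dz/z = δ_{jk}`, then
`∑_{k<M} P̂_k(z⁻¹) P_k(w)
  = [z^{-M} P_M(z) w^M P̂_M(w⁻¹) − P̂_M(z⁻¹) P_M(w)] / (1 − w/z)`. -/
theorem christoffel_darboux_circle
    (ρ : ℂ → ℂ) (P Phat : ℕ → Polynomial ℂ)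
    (hdegP : ∀ k, (P k).degree = (k : ℕ))
    (hdegPhat : ∀ k, (Phat k).degree = (k : ℕ))
    (horth : ∀ j k : ℕ,
      (2 * Real.pi * Complex.I)⁻¹ *
          (∮ z in C(0, 1), (P j).eval z * (Phat k).eval z⁻¹ * ρ z * z⁻¹)
        = if j = k then 1 else 0)
    (M : ℕ) (z w : ℂ) (hz : z ≠ 0) (hw : w ≠ 0) (hzw : w ≠ z) :
    (∑ k ∈ Finset.range M, (Phat k).eval z⁻¹ * (P k).eval w)
      = (z ^ (-(M : ℤ)) * (P M).eval z * w ^ (M : ℤ) * (Phat M).eval w⁻¹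
          - (Phat M).eval z⁻¹ * (P M).eval w) / (1 - w / z) := by
  have hρ : CircleIntegrable (fun z => ρ z * z⁻¹) 0 1 :=
    cdx_weight_integrable hdegP hdegPhat horth
  have hndP : ∀ k, (P k).natDegree = k := fun k =>
    Polynomial.natDegree_eq_of_degree_eq_some (hdegP k)
  have hndPh : ∀ k, (Phat k).natDegree = k := fun k =>
    Polynomial.natDegree_eq_of_degree_eq_some (hdegPhat k)
  have hzi : z⁻¹ ≠ 0 := inv_ne_zero hz
  set S := cdxS P Phat (M+1) with hSdef
  set A := cdxS P Phat M with hAdef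
  have hSper : ∀ a b : Fin (M+1), S a.rev b.rev = S b a := fun a b =>
    cdxS_persym hρ hdegP hdegPhat horth _ a b
  have hAper : ∀ a b : Fin M, A a.rev b.rev = A b a := fun a b =>
    cdxS_persym hρ hdegP hdegPhat horth _ a b
  -- abbreviations (plain terms)
  set u := (P M).coeff M with hu
  set v := (Phat M).coeff M with hv
  -- eval expansions for the degree-M polynomials
  have hPMz : (∑ i : Fin M, (P M).coeff (i:ℕ) * z ^ (i:ℕ)) = (P M).eval z - u * z ^ M := by
    rw [Polynomial.eval_eq_sum_range' (n := M+1) (by rw [hndP]; omega) z, Finset.sum_range_succ,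
      ← Fin.sum_univ_eq_sum_range (fun i => (P M).coeff i * z ^ i) M]
    ring
  have hPhMw : (∑ j : Fin M, (Phat M).coeff (j:ℕ) * (w⁻¹) ^ (j:ℕ))
      = (Phat M).eval w⁻¹ - v * (w⁻¹) ^ M := by
    rw [Polynomial.eval_eq_sum_range' (n := M+1) (by rw [hndPh]; omega) w⁻¹,
      Finset.sum_range_succ,
      ← Fin.sum_univ_eq_sum_range (fun j => (Phat M).coeff j * (w⁻¹) ^ j) M]
    ring
  have hPhMwfull : (∑ j : Fin (M+1), (Phat M).coeff (j:ℕ) * (w⁻¹) ^ (j:ℕ))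
      = (Phat M).eval w⁻¹ := by
    rw [Polynomial.eval_eq_sum_range' (n := M+1) (by rw [hndPh]; omega) w⁻¹,
      ← Fin.sum_univ_eq_sum_range (fun j => (Phat M).coeff j * (w⁻¹) ^ j) (M+1)]
  -- coefficient vanishing
  have hcoeffP : ∀ k : Fin M, (P (k:ℕ)).coeff M = 0 := fun k =>
    Polynomial.coeff_eq_zero_of_natDegree_lt (by rw [hndP]; exact k.isLt)
  have hcoeffPh : ∀ k : Fin M, (Phat (k:ℕ)).coeff M = 0 := fun k =>
    Polynomial.coeff_eq_zero_of_natDegree_lt (by rw [hndPh]; exact k.isLt)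
  -- last column and last row of S
  have hcol : ∀ i : Fin (M+1), S i (Fin.last M) = (Phat M).coeff (i:ℕ) * u := by
    intro i
    rw [hSdef, cdxS_apply, Fin.sum_univ_castSucc]
    rw [Finset.sum_eq_zero (fun k _ => by
      show (Phat ((k.castSucc : Fin (M+1)):ℕ)).coeff (i:ℕ)
          * (P ((k.castSucc : Fin (M+1)):ℕ)).coeff ((Fin.last M : Fin (M+1)):ℕ) = 0
      simp only [Fin.coe_castSucc, Fin.val_last]
      rw [hcoeffP k, mul_zero])]
    simp [Fin.val_last, hu]
  have hrow : ∀ j : Fin (M+1), S (Fin.last M) j = v * (P M).coeff (j:ℕ) := by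
    intro j
    rw [hSdef, cdxS_apply, Fin.sum_univ_castSucc]
    rw [Finset.sum_eq_zero (fun k _ => by
      show (Phat ((k.castSucc : Fin (M+1)):ℕ)).coeff ((Fin.last M : Fin (M+1)):ℕ)
          * (P ((k.castSucc : Fin (M+1)):ℕ)).coeff (j:ℕ) = 0
      simp only [Fin.coe_castSucc, Fin.val_last]
      rw [hcoeffPh k, zero_mul])]
    simp [Fin.val_last, hv]
  -- leading block relation
  have hfact1 : ∀ a b : Fin M, S a.castSucc b.castSucc
      = A a b + (Phat M).coeff (a:ℕ) * (P M).coeff (b:ℕ) := by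
    intro a b
    rw [hSdef, cdxS_apply, Fin.sum_univ_castSucc, hAdef, cdxS_apply]
    simp [Fin.coe_castSucc, Fin.val_last]
  -- key (Toeplitz) relation for the trailing block
  have hkey : ∀ i j : Fin M, S i.succ j.succ
      = A i j + (Phat M).coeff ((j.rev : Fin M):ℕ) * (P M).coeff ((i.rev : Fin M):ℕ) := by
    intro i j
    have h1 : S i.succ j.succ = S (j.rev.castSucc) (i.rev.castSucc) := by
      rw [← hSper (i.rev.castSucc) (j.rev.castSucc), ← Fin.rev_succ, ← Fin.rev_succ,
        Fin.rev_rev, Fin.rev_rev]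
    rw [h1, hfact1, hAper]
  -- kernel expansions
  have hK1 := cdx_kernel_expand hdegP hdegPhat (M+1) z w
  have hK0 := cdx_kernel_expand hdegP hdegPhat M z w
  rw [← hSdef] at hK1
  rw [← hAdef] at hK0
  -- the reversed partial sums
  have hE1 : (∑ i : Fin M, (P M).coeff ((i.rev : Fin M):ℕ) * (z⁻¹) ^ ((i:ℕ)+1))
      = (z⁻¹) ^ M * (P M).eval z - u := by
    rw [← cdx_rev_sum (fun i : Fin M => (P M).coeff ((i.rev : Fin M):ℕ) * (z⁻¹) ^ ((i:ℕ)+1))]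
    have step : ∀ i : Fin M, (P M).coeff ((i.rev.rev : Fin M):ℕ) * (z⁻¹) ^ (((i.rev : Fin M):ℕ)+1)
        = (P M).coeff (i:ℕ) * ((z⁻¹) ^ M * z ^ (i:ℕ)) := by
      intro i
      have hlt := i.isLt
      have h2 : (((i.rev : Fin M):ℕ)+1) = M - (i:ℕ) := by rw [Fin.val_rev]; omega
      rw [Fin.rev_rev, h2, cdx_pow_sub hzi (le_of_lt hlt), inv_inv]
    rw [Finset.sum_congr rfl (fun i _ => step i)]
    have hzz : (z⁻¹) ^ M * z ^ M = 1 := by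
      rw [inv_pow, inv_mul_cancel₀ (pow_ne_zero _ hz)]
    have : (∑ i : Fin M, (P M).coeff (i:ℕ) * ((z⁻¹) ^ M * z ^ (i:ℕ)))
        = (z⁻¹) ^ M * ∑ i : Fin M, (P M).coeff (i:ℕ) * z ^ (i:ℕ) := by
      rw [Finset.mul_sum]
      exact Finset.sum_congr rfl fun i _ => by ring
    rw [this, hPMz]
    linear_combination (-u : ℂ) * hzz
  have hE2 : (∑ j : Fin M, (Phat M).coeff ((j.rev : Fin M):ℕ) * w ^ ((j:ℕ)+1))
      = w ^ M * (Phat M).eval w⁻¹ - v := by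
    rw [← cdx_rev_sum (fun j : Fin M => (Phat M).coeff ((j.rev : Fin M):ℕ) * w ^ ((j:ℕ)+1))]
    have step : ∀ j : Fin M, (Phat M).coeff ((j.rev.rev : Fin M):ℕ) * w ^ (((j.rev : Fin M):ℕ)+1)
        = (Phat M).coeff (j:ℕ) * (w ^ M * (w⁻¹) ^ (j:ℕ)) := by
      intro j
      have hlt := j.isLt
      have h2 : (((j.rev : Fin M):ℕ)+1) = M - (j:ℕ) := by rw [Fin.val_rev]; omega
      rw [Fin.rev_rev, h2, cdx_pow_sub hw (le_of_lt hlt)]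
    rw [Finset.sum_congr rfl (fun j _ => step j)]
    have hww : w ^ M * (w⁻¹) ^ M = 1 := by
      rw [inv_pow, mul_inv_cancel₀ (pow_ne_zero _ hw)]
    have : (∑ j : Fin M, (Phat M).coeff (j:ℕ) * (w ^ M * (w⁻¹) ^ (j:ℕ)))
        = w ^ M * ∑ j : Fin M, (Phat M).coeff (j:ℕ) * (w⁻¹) ^ (j:ℕ) := by
      rw [Finset.mul_sum]
      exact Finset.sum_congr rfl fun j _ => by ring
    rw [this, hPhMw]
    linear_combination (-v : ℂ) * hww
  -- first row of the big kernel sum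
  have hR0 : (∑ j : Fin (M+1), S 0 j * ((z⁻¹) ^ (((0 : Fin (M+1))):ℕ) * w ^ (j:ℕ)))
      = u * (w ^ M * (Phat M).eval w⁻¹) := by
    have hS0 : ∀ j : Fin (M+1), S 0 j = (Phat M).coeff ((j.rev : Fin (M+1)):ℕ) * u := by
      intro j
      have e1 : S 0 j = S (Fin.last M).rev j.rev.rev := by rw [Fin.rev_last, Fin.rev_rev]
      rw [e1, hSper, hcol]
    rw [Finset.sum_congr rfl (fun j _ => by rw [hS0 j])]
    simp only [Fin.val_zero, pow_zero, one_mul]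
    rw [← cdx_rev_sum (fun j : Fin (M+1) =>
      (Phat M).coeff ((j.rev : Fin (M+1)):ℕ) * u * w ^ (j:ℕ))]
    have step : ∀ j : Fin (M+1), (Phat M).coeff ((j.rev.rev : Fin (M+1)):ℕ) * u
          * w ^ ((j.rev : Fin (M+1)):ℕ)
        = (Phat M).coeff (j:ℕ) * u * (w ^ M * (w⁻¹) ^ (j:ℕ)) := by
      intro j
      have hlt := j.isLt
      have h2 : ((j.rev : Fin (M+1)):ℕ) = M - (j:ℕ) := by rw [Fin.val_rev]; omega
      rw [Fin.rev_rev, h2, cdx_pow_sub hw (by omega)]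
    rw [Finset.sum_congr rfl (fun j _ => step j)]
    have : (∑ j : Fin (M+1), (Phat M).coeff (j:ℕ) * u * (w ^ M * (w⁻¹) ^ (j:ℕ)))
        = u * w ^ M * ∑ j : Fin (M+1), (Phat M).coeff (j:ℕ) * (w⁻¹) ^ (j:ℕ) := by
      rw [Finset.mul_sum]
      exact Finset.sum_congr rfl fun j _ => by ring
    rw [this, hPhMwfull]
    ring
  -- first column (tail) of the big kernel sum
  have hC0 : (∑ i : Fin M, S i.succ 0 * ((z⁻¹) ^ ((i.succ : Fin (M+1)):ℕ)
        * w ^ (((0 : Fin (M+1))):ℕ)))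
      = v * ((z⁻¹) ^ M * (P M).eval z - u) := by
    have hSi0 : ∀ i : Fin M, S i.succ 0 = v * (P M).coeff ((i.rev : Fin M):ℕ) := by
      intro i
      have e1 : S i.succ (0 : Fin (M+1)) = S (i.rev.castSucc).rev (Fin.last M).rev := by
        rw [Fin.rev_last, ← Fin.rev_succ, Fin.rev_rev]
      rw [e1, hSper, hrow, Fin.coe_castSucc]
    rw [Finset.sum_congr rfl (fun i _ => by rw [hSi0 i])]
    simp only [Fin.val_zero, pow_zero, mul_one, Fin.val_succ]
    rw [← hE1, Finset.mul_sum]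
    exact Finset.sum_congr rfl fun i _ => by ring
  -- interior of the big kernel sum
  have hI : (∑ i : Fin M, ∑ j : Fin M, S i.succ j.succ * ((z⁻¹) ^ ((i.succ : Fin (M+1)):ℕ)
        * w ^ ((j.succ : Fin (M+1)):ℕ)))
      = (z⁻¹ * w) * (∑ i : Fin M, ∑ j : Fin M, A i j * ((z⁻¹) ^ (i:ℕ) * w ^ (j:ℕ)))
        + ((z⁻¹) ^ M * (P M).eval z - u) * (w ^ M * (Phat M).eval w⁻¹ - v) := by
    have expand : ∀ i j : Fin M, S i.succ j.succ * ((z⁻¹) ^ ((i.succ : Fin (M+1)):ℕ)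
          * w ^ ((j.succ : Fin (M+1)):ℕ))
        = (z⁻¹ * w) * (A i j * ((z⁻¹) ^ (i:ℕ) * w ^ (j:ℕ)))
          + ((P M).coeff ((i.rev : Fin M):ℕ) * (z⁻¹) ^ ((i:ℕ)+1))
            * ((Phat M).coeff ((j.rev : Fin M):ℕ) * w ^ ((j:ℕ)+1)) := by
      intro i j
      rw [hkey i j, Fin.val_succ, Fin.val_succ]
      ring
    rw [Finset.sum_congr rfl (fun i _ => Finset.sum_congr rfl (fun j _ => expand i j))]
    rw [Finset.sum_congr rfl (fun i _ => Finset.sum_add_distrib), Finset.sum_add_distrib]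
    congr 1
    · rw [Finset.mul_sum]
      exact Finset.sum_congr rfl fun i _ => by rw [Finset.mul_sum]
    · rw [← hE1, ← hE2, Finset.sum_mul_sum]
  -- splitting of the big kernel sum
  have hsplit : (∑ i : Fin (M+1), ∑ j : Fin (M+1), S i j * ((z⁻¹) ^ (i:ℕ) * w ^ (j:ℕ)))
      = (∑ j : Fin (M+1), S 0 j * ((z⁻¹) ^ (((0 : Fin (M+1))):ℕ) * w ^ (j:ℕ)))
        + ((∑ i : Fin M, S i.succ 0 * ((z⁻¹) ^ ((i.succ : Fin (M+1)):ℕ)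
            * w ^ (((0 : Fin (M+1))):ℕ)))
          + ∑ i : Fin M, ∑ j : Fin M, S i.succ j.succ * ((z⁻¹) ^ ((i.succ : Fin (M+1)):ℕ)
            * w ^ ((j.succ : Fin (M+1)):ℕ))) := by
    rw [Fin.sum_univ_succ (fun i : Fin (M+1) =>
      ∑ j : Fin (M+1), S i j * ((z⁻¹) ^ (i:ℕ) * w ^ (j:ℕ)))]
    congr 1
    rw [Finset.sum_congr rfl (fun i _ => Fin.sum_univ_succ (fun j : Fin (M+1) =>
      S i.succ j * ((z⁻¹) ^ ((i.succ : Fin (M+1)):ℕ) * w ^ (j:ℕ))))]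
    rw [Finset.sum_add_distrib]
  have hbeta : (∑ i : Fin (M+1), ∑ j : Fin (M+1), S i j * ((z⁻¹) ^ (i:ℕ) * w ^ (j:ℕ)))
      = (z⁻¹ * w) * (∑ i : Fin M, ∑ j : Fin M, A i j * ((z⁻¹) ^ (i:ℕ) * w ^ (j:ℕ)))
        + ((z⁻¹) ^ M * (P M).eval z) * (w ^ M * (Phat M).eval w⁻¹) := by
    rw [hsplit, hR0, hC0, hI]
    ring
  -- final assembly
  have hK1a := Finset.sum_range_succ (fun k => (Phat k).eval z⁻¹ * (P k).eval w) M
  have hden : (1 : ℂ) - w / z ≠ 0 := by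
    rw [sub_ne_zero]
    intro h
    exact hzw ((div_eq_one_iff_eq hz).mp h.symm)
  rw [eq_div_iff hden]
  have hzpow : z ^ (-(M : ℤ)) = (z⁻¹) ^ M := by rw [_root_.zpow_neg, zpow_natCast, inv_pow]
  have hwpow : w ^ ((M : ℤ)) = w ^ M := zpow_natCast w M
  rw [hzpow, hwpow]
  have hdiv : w / z = w * z⁻¹ := div_eq_mul_inv w z
  rw [hdiv]
  linear_combination hK1 - hK1a + hbeta - (z⁻¹ * w) * hK0
end

section
/- For a function F(z,w) holomorphic in both variables in an annular region containing the contours, the interchange-of-contours identity holds: (1/2πi)² ∮_{Γ_{0,a}} dz ∮_{Γ_{0,a,z}} dw F(z,w)/(w−z) = (1/2πi)² ∮_{Γ_{0,a}} dw ∮_{Γ_{0,a,w}} dz F(z,w)/(w−z) + (1/2πi)∮_{Γ_{0,a}} F(z,z) dz. -/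
open Complex MeasureTheory Metric Set Function
open scoped Real

lemma interval_swap {g : ℝ → ℝ → ℂ} (hg : Continuous (uncurry g)) :
    (∫ θ in (0:ℝ)..(2*π), ∫ φ in (0:ℝ)..(2*π), g θ φ)
      = ∫ φ in (0:ℝ)..(2*π), ∫ θ in (0:ℝ)..(2*π), g θ φ := by
  have hb : (0:ℝ) ≤ 2*π := by positivity
  simp only [intervalIntegral.integral_of_le hb]
  apply MeasureTheory.integral_integral_swap
  rw [Measure.prod_restrict, ← Measure.volume_eq_prod]
  exact (hg.continuousOn.integrableOn_compact (isCompact_Icc.prod isCompact_Icc)).mono_set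
    (Set.prod_mono Set.Ioc_subset_Icc_self Set.Ioc_subset_Icc_self)

lemma circle_fubini {r₁ r₂ : ℝ} (h₁ : 0 ≤ r₁) (h₂ : 0 ≤ r₂) {f : ℂ → ℂ → ℂ}
    (hf : ContinuousOn (fun p : ℂ × ℂ => f p.1 p.2)
      (Metric.sphere (0:ℂ) r₁ ×ˢ Metric.sphere (0:ℂ) r₂)) :
    (∮ z in C(0, r₁), ∮ w in C(0, r₂), f z w) = ∮ w in C(0, r₂), ∮ z in C(0, r₁), f z w := by
  have hmap : Continuous fun p : ℝ × ℝ => ((circleMap 0 r₁ p.1, circleMap 0 r₂ p.2) : ℂ × ℂ) :=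
    ((continuous_circleMap 0 r₁).comp continuous_fst).prodMk
      ((continuous_circleMap 0 r₂).comp continuous_snd)
  have hc : Continuous fun p : ℝ × ℝ => f (circleMap 0 r₁ p.1) (circleMap 0 r₂ p.2) :=
    hf.comp_continuous hmap fun p => ⟨circleMap_mem_sphere _ h₁ _, circleMap_mem_sphere _ h₂ _⟩
  set g : ℝ → ℝ → ℂ := fun θ φ => deriv (circleMap 0 r₁) θ •
      deriv (circleMap 0 r₂) φ • f (circleMap 0 r₁ θ) (circleMap 0 r₂ φ) with hgdef
  have hgc : Continuous (uncurry g) := by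
    simp only [hgdef, uncurry, deriv_circleMap]
    exact (((continuous_circleMap 0 r₁).comp continuous_fst).mul continuous_const).smul
      ((((continuous_circleMap 0 r₂).comp continuous_snd).mul continuous_const).smul hc)
  calc (∮ z in C(0, r₁), ∮ w in C(0, r₂), f z w)
      = ∫ θ in (0:ℝ)..(2*π), ∫ φ in (0:ℝ)..(2*π), g θ φ := by
        simp only [circleIntegral]
        refine intervalIntegral.integral_congr fun θ _ => ?_
        exact (intervalIntegral.integral_smul _ _).symm
    _ = ∫ φ in (0:ℝ)..(2*π), ∫ θ in (0:ℝ)..(2*π), g θ φ := interval_swap hgc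
    _ = ∮ w in C(0, r₂), ∮ z in C(0, r₁), f z w := by
        simp only [circleIntegral]
        refine intervalIntegral.integral_congr fun φ _ => ?_
        rw [← intervalIntegral.integral_smul]
        refine intervalIntegral.integral_congr fun θ _ => ?_
        exact (smul_comm _ _ _).symm

lemma circleIntegral_add' {f g : ℂ → ℂ} {c : ℂ} {R : ℝ} (hf : CircleIntegrable f c R)
    (hg : CircleIntegrable g c R) :
    (∮ z in C(c, R), (f z + g z)) = (∮ z in C(c, R), f z) + ∮ z in C(c, R), g z := by
  simp only [circleIntegral, smul_add, intervalIntegral.integral_add hf.out hg.out]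

/-- Interchange-of-contours identity: for `F(z,w)` holomorphic in both variables in a
neighborhood of the disk of radius `R` except at the points `0` and `a`
(with `0 < a < r < R`),
`(1/2πi)² ∮_{|z|=r} dz ∮_{|w|=R} dw F(z,w)/(w−z)
  = (1/2πi)² ∮_{|w|=r} dw ∮_{|z|=R} dz F(z,w)/(w−z) + (1/2πi)∮_{|z|=r} F(z,z) dz`. -/
theorem contour_interchange (a r R : ℝ) (ha : 0 < a) (har : a < r) (hrR : r < R)
    (U : Set ℂ) (hU : IsOpen U) (hball : Metric.closedBall 0 R ⊆ U)
    (F : ℂ → ℂ → ℂ)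
    (hF : DifferentiableOn ℂ (fun p : ℂ × ℂ => F p.1 p.2)
      ((U \ {0, (a : ℂ)}) ×ˢ (U \ {0, (a : ℂ)}))) :
    ((2 * Real.pi * Complex.I)⁻¹) ^ 2 *
        (∮ z in C(0, r), ∮ w in C(0, R), F z w / (w - z))
      = ((2 * Real.pi * Complex.I)⁻¹) ^ 2 *
          (∮ w in C(0, r), ∮ z in C(0, R), F z w / (w - z))
        + (2 * Real.pi * Complex.I)⁻¹ * ∮ z in C(0, r), F z z := by
  set s : Set ℂ := U \ {0, (a : ℂ)} with hsdef
  have hs : IsOpen s := hU.sdiff ((Set.finite_singleton _).insert _).isClosed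
  set r' : ℝ := (a + r) / 2 with hr'def
  have har' : a < r' := by rw [hr'def]; linarith
  have hr'r : r' < r := by rw [hr'def]; linarith
  have h0r' : (0:ℝ) < r' := lt_trans ha har'
  have h0r : (0:ℝ) < r := h0r'.trans hr'r
  have h0R : (0:ℝ) < R := h0r.trans hrR
  have hr'R : r' < R := hr'r.trans hrR
  -- membership in s
  have mem_s : ∀ {z : ℂ}, a < ‖z‖ → ‖z‖ ≤ R → z ∈ s := by
    intro z h1 h2
    refine ⟨hball (by simpa [mem_closedBall_zero_iff] using h2), ?_⟩
    intro hz
    rcases hz with rfl | hz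
    · simp at h1; linarith
    · rw [Set.mem_singleton_iff] at hz; subst hz
      rw [Complex.norm_real, Real.norm_eq_abs, abs_of_pos ha] at h1
      linarith
  have sphere_sub : ∀ {ρ : ℝ}, a < ρ → ρ ≤ R → Metric.sphere (0:ℂ) ρ ⊆ s := by
    intro ρ h1 h2 z hz
    rw [mem_sphere_zero_iff_norm] at hz
    exact mem_s (hz ▸ h1) (hz ▸ h2)
  -- differentiability facts
  have hFd : ∀ {z w : ℂ}, z ∈ s → w ∈ s →
      DifferentiableAt ℂ (fun p : ℂ × ℂ => F p.1 p.2) (z, w) := fun hz hw =>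
    (hF _ ⟨hz, hw⟩).differentiableAt ((hs.prod hs).mem_nhds ⟨hz, hw⟩)
  have hFzw : ∀ {z w : ℂ}, z ∈ s → w ∈ s → DifferentiableAt ℂ (fun w' => F z w') w :=
    fun {z w} hz hw =>
      (hFd hz hw).comp w ((differentiableAt_const z).prodMk differentiableAt_id)
  have hFwz : ∀ {z w : ℂ}, z ∈ s → w ∈ s → DifferentiableAt ℂ (fun z' => F z' w) z :=
    fun {z w} hz hw =>
      by
        have h := (hFd hz hw).comp z
          ((differentiableAt_id (𝕜 := ℂ) (x := z)).prodMk (differentiableAt_const (𝕜 := ℂ) w))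
        exact h
  have hFcont : ContinuousOn (fun p : ℂ × ℂ => F p.1 p.2) (s ×ˢ s) := hF.continuousOn
  -- continuity of the full integrand on products of spheres
  have hGcont : ∀ {r₁ r₂ : ℝ}, a < r₁ → r₁ ≤ R → a < r₂ → r₂ ≤ R → r₁ ≠ r₂ →
      ContinuousOn (fun p : ℂ × ℂ => F p.1 p.2 / (p.2 - p.1))
        (Metric.sphere (0:ℂ) r₁ ×ˢ Metric.sphere (0:ℂ) r₂) := by
    intro r₁ r₂ h1 h1' h2 h2' hne
    have hsub : Metric.sphere (0:ℂ) r₁ ×ˢ Metric.sphere (0:ℂ) r₂ ⊆ s ×ˢ s := by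
      rintro ⟨z, w⟩ ⟨hz, hw⟩
      exact ⟨sphere_sub h1 h1' hz, sphere_sub h2 h2' hw⟩
    refine (hFcont.mono hsub).div ((continuous_snd.sub continuous_fst).continuousOn) ?_
    rintro ⟨z, w⟩ ⟨hz, hw⟩
    rw [mem_sphere_zero_iff_norm] at hz hw
    intro h
    rw [sub_eq_zero] at h
    exact hne (hz ▸ hw ▸ congrArg norm h.symm)
  -- residue step
  have hres : ∀ z ∈ Metric.sphere (0:ℂ) r,
      (∮ w in C(0, R), F z w / (w - z))
        = (∮ w in C(0, r'), F z w / (w - z)) + (2 * ↑π * I) * F z z := by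
    intro z hz
    rw [mem_sphere_zero_iff_norm] at hz
    have hzs : z ∈ s := mem_s (hz ▸ har) (hz ▸ hrR.le)
    have hFz : DifferentiableAt ℂ (fun w => F z w) z := hFzw hzs hzs
    set d := deriv (fun w => F z w) z with hd
    set g : ℂ → ℂ := Function.update (slope (fun w => F z w) z) z d with hg
    have hgval : ∀ w : ℂ, w ≠ z → g w = (F z w - F z z) / (w - z) := by
      intro w hw
      rw [hg, Function.update_of_ne hw, slope_def_field]
    have hwmem : ∀ {w : ℂ}, r' ≤ ‖w‖ → ‖w‖ ≤ R → w ∈ s :=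
      fun hw1 hw2 => mem_s (lt_of_lt_of_le har' hw1) hw2
    have hquotd : ∀ {w : ℂ}, w ∈ s → w ≠ z →
        DifferentiableAt ℂ (fun w' => (F z w' - F z z) / (w' - z)) w := by
      intro w hw hwz
      exact ((hFzw hzs hw).sub_const _).div (differentiableAt_id.sub_const _)
        (sub_ne_zero.2 hwz)
    have hcont : ContinuousOn g (closedBall (0:ℂ) R \ ball 0 r') := by
      intro w hw
      have hw1 : r' ≤ ‖w‖ := by
        have := hw.2; rw [mem_ball_zero_iff] at this; exact not_lt.1 this
      have hw2 : ‖w‖ ≤ R := mem_closedBall_zero_iff.1 hw.1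
      by_cases hwz : w = z
      · subst hwz
        apply ContinuousAt.continuousWithinAt
        rw [hg, continuousAt_update_same]
        exact hasDerivAt_iff_tendsto_slope.1 hFz.hasDerivAt
      · apply ContinuousAt.continuousWithinAt
        have hq : ContinuousAt (fun w' => (F z w' - F z z) / (w' - z)) w :=
          (hquotd (hwmem hw1 hw2) hwz).continuousAt
        refine hq.congr ?_
        filter_upwards [isOpen_compl_singleton.mem_nhds hwz] with w' hw'
        exact (hgval w' hw').symm
    have hdiff : ∀ w ∈ (ball (0:ℂ) R \ closedBall 0 r') \ {z}, DifferentiableAt ℂ g w := by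
      intro w hw
      have hwz : w ≠ z := hw.2
      have hw1 : r' ≤ ‖w‖ := by
        have := hw.1.2; rw [mem_closedBall_zero_iff] at this; exact (not_le.1 this).le
      have hw2 : ‖w‖ ≤ R := (mem_ball_zero_iff.1 hw.1.1).le
      refine (hquotd (hwmem hw1 hw2) hwz).congr_of_eventuallyEq ?_
      filter_upwards [isOpen_compl_singleton.mem_nhds hwz] with w' hw'
      exact hgval w' hw'
    have key := circleIntegral_eq_of_differentiable_on_annulus_off_countable h0r'
      hr'R.le (Set.countable_singleton z) hcont hdiff
    have hsubinv_ne : ∀ {ρ : ℝ} (w : ℂ), w ∈ Metric.sphere (0:ℂ) ρ → ρ ≠ r → w - z ≠ 0 := by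
      intro ρ w hw hne
      rw [mem_sphere_zero_iff_norm] at hw
      intro h; rw [sub_eq_zero] at h; replace h : w = z := h
      exact hne (by rw [← hw, h, hz])
    have hint1 : ∀ {ρ : ℝ}, a < ρ → ρ ≤ R → ρ ≠ r →
        CircleIntegrable (fun w => F z w / (w - z)) 0 ρ := by
      intro ρ hρ1 hρ2 hρ3
      refine ContinuousOn.circleIntegrable (by linarith) ?_
      intro w hw
      have hws : w ∈ s := sphere_sub hρ1 hρ2 hw
      exact ((hFzw hzs hws).continuousAt).continuousWithinAt.div
        (continuousWithinAt_id.sub continuousWithinAt_const)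
        (hsubinv_ne w hw hρ3)
    have hint2 : ∀ {ρ : ℝ}, 0 ≤ ρ → ρ ≠ r →
        CircleIntegrable (fun w => F z z * (w - z)⁻¹) 0 ρ := by
      intro ρ hρ1 hρ3
      refine ContinuousOn.circleIntegrable hρ1 ?_
      intro w hw
      exact continuousWithinAt_const.mul
        ((continuousWithinAt_id.sub continuousWithinAt_const).inv₀ (hsubinv_ne w hw hρ3))
    have hgsplit : ∀ {ρ : ℝ}, a < ρ → ρ ≤ R → ρ ≠ r →
        (∮ w in C(0, ρ), g w)
          = (∮ w in C(0, ρ), F z w / (w - z)) - ∮ w in C(0, ρ), F z z * (w - z)⁻¹ := by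
      intro ρ hρ1 hρ2 hρ3
      have h0ρ : (0:ℝ) ≤ ρ := le_of_lt (ha.trans hρ1)
      rw [← circleIntegral.integral_sub (hint1 hρ1 hρ2 hρ3) (hint2 h0ρ hρ3)]
      refine circleIntegral.integral_congr h0ρ fun w hw => ?_
      have hwz : w ≠ z := by
        intro h; exact hsubinv_ne w hw hρ3 (by rw [h, sub_self])
      rw [hgval w hwz, sub_div, div_eq_mul_inv (F z z)]
    have eR : (∮ w in C(0, R), g w)
        = (∮ w in C(0, R), F z w / (w - z)) - F z z * (2 * ↑π * I) := by
      rw [hgsplit (har.trans hrR) le_rfl (hrR.ne'),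
        circleIntegral.integral_const_mul,
        circleIntegral.integral_sub_inv_of_mem_ball (by
          rw [mem_ball_zero_iff]; rw [hz]; exact hrR)]
    have er' : (∮ w in C(0, r'), g w) = ∮ w in C(0, r'), F z w / (w - z) := by
      rw [hgsplit har' hr'R.le (hr'r.ne), circleIntegral.integral_const_mul]
      have hzero : (∮ w in C(0, r'), (w - z)⁻¹) = 0 := by
        refine circleIntegral_eq_zero_of_differentiable_on_off_countable h0r'.le
          Set.countable_empty ?_ ?_
        · intro w hw
          refine (continuousWithinAt_id.sub continuousWithinAt_const).inv₀ ?_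
          have hwn : ‖w‖ ≤ r' := mem_closedBall_zero_iff.1 hw
          intro h; change w - z = 0 at h; rw [sub_eq_zero] at h; replace h : w = z := h
          rw [h, hz] at hwn; linarith
        · intro w hw
          refine (differentiableAt_id.sub_const _).inv ?_
          have hwn : ‖w‖ < r' := mem_ball_zero_iff.1 hw.1
          intro h; rw [sub_eq_zero] at h; replace h : w = z := h
          rw [h, hz] at hwn; linarith
      rw [hzero, mul_zero, sub_zero]
    rw [eR, er'] at key
    linear_combination key
  -- circle integrability of the inner integral as a function of z
  have hA : CircleIntegrable (fun z => ∮ w in C(0, r'), F z w / (w - z)) 0 r := by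
    have hmap : Continuous fun p : ℝ × ℝ => ((circleMap 0 r p.1, circleMap 0 r' p.2) : ℂ × ℂ) :=
      ((continuous_circleMap 0 r).comp continuous_fst).prodMk
        ((continuous_circleMap 0 r').comp continuous_snd)
    have hc : Continuous fun p : ℝ × ℝ =>
        F (circleMap 0 r p.1) (circleMap 0 r' p.2)
          / (circleMap 0 r' p.2 - circleMap 0 r p.1) :=
      (hGcont har hrR.le har' hr'R.le hr'r.ne').comp_continuous hmap
        fun p => ⟨circleMap_mem_sphere _ h0r.le _, circleMap_mem_sphere _ h0r'.le _⟩
    have hcont : Continuous fun θ : ℝ =>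
        ∮ w in C(0, r'), F (circleMap 0 r θ) w / (w - circleMap 0 r θ) := by
      have := intervalIntegral.continuous_parametric_intervalIntegral_of_continuous'
        (μ := volume)
        (f := fun θ φ => deriv (circleMap 0 r') φ •
          (F (circleMap 0 r θ) (circleMap 0 r' φ)
            / (circleMap 0 r' φ - circleMap 0 r θ)))
        (by
          simp only [uncurry, deriv_circleMap]
          exact (((continuous_circleMap 0 r').comp continuous_snd).mul
            continuous_const).smul hc) 0 (2*π)
      exact this
    exact hcont.intervalIntegrable 0 (2*π)
  have hB : CircleIntegrable (fun z => (2 * ↑π * I) * F z z) 0 r := by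
    refine ContinuousOn.circleIntegrable h0r.le ?_
    refine continuousOn_const.mul ?_
    have : ContinuousOn (fun z : ℂ => F z z) s := by
      refine hFcont.comp (continuous_id.prodMk continuous_id).continuousOn fun z hz => ⟨hz, hz⟩
    exact this.mono (sphere_sub har hrR.le)
  -- contour deformations
  have hdef1 : ∀ w ∈ Metric.sphere (0:ℂ) r',
      (∮ z in C(0, r), F z w / (w - z)) = ∮ z in C(0, R), F z w / (w - z) := by
    intro w hw
    have hws : w ∈ s := sphere_sub har' hr'R.le hw
    have hwn : ‖w‖ = r' := mem_sphere_zero_iff_norm.1 hw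
    have hne : ∀ {z : ℂ}, r ≤ ‖z‖ → w - z ≠ 0 := by
      intro z hzn h; rw [sub_eq_zero] at h; rw [← h, hwn] at hzn; linarith
    refine (circleIntegral_eq_of_differentiable_on_annulus_off_countable h0r hrR.le
      Set.countable_empty ?_ ?_).symm
    · intro z hz
      have hz1 : r ≤ ‖z‖ := by
        have := hz.2; rw [mem_ball_zero_iff] at this; exact not_lt.1 this
      have hz2 : ‖z‖ ≤ R := mem_closedBall_zero_iff.1 hz.1
      have hzs : z ∈ s := mem_s (har.trans_le hz1) hz2
      exact ((hFwz hzs hws).continuousAt).continuousWithinAt.div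
        (continuousWithinAt_const.sub continuousWithinAt_id) (hne hz1)
    · intro z hz
      have hz1 : r ≤ ‖z‖ := by
        have := hz.1.2; rw [mem_closedBall_zero_iff] at this; exact (not_le.1 this).le
      have hz2 : ‖z‖ ≤ R := (mem_ball_zero_iff.1 hz.1.1).le
      have hzs : z ∈ s := mem_s (har.trans_le hz1) hz2
      exact (hFwz hzs hws).div ((differentiableAt_const w).sub differentiableAt_id) (hne hz1)
  have hdef2 : ∀ z ∈ Metric.sphere (0:ℂ) R,
      (∮ w in C(0, r'), F z w / (w - z)) = ∮ w in C(0, r), F z w / (w - z) := by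
    intro z hz
    have hzs : z ∈ s := sphere_sub (har.trans hrR) le_rfl hz
    have hzn : ‖z‖ = R := mem_sphere_zero_iff_norm.1 hz
    have hne : ∀ {w : ℂ}, ‖w‖ ≤ r → w - z ≠ 0 := by
      intro w hwn h; rw [sub_eq_zero] at h; rw [h, hzn] at hwn; linarith
    refine (circleIntegral_eq_of_differentiable_on_annulus_off_countable h0r' hr'r.le
      Set.countable_empty ?_ ?_).symm
    · intro w hw
      have hw1 : r' ≤ ‖w‖ := by
        have := hw.2; rw [mem_ball_zero_iff] at this; exact not_lt.1 this
      have hw2 : ‖w‖ ≤ r := mem_closedBall_zero_iff.1 hw.1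
      have hws : w ∈ s := mem_s (har'.trans_le hw1) (hw2.trans hrR.le)
      exact ((hFzw hzs hws).continuousAt).continuousWithinAt.div
        (continuousWithinAt_id.sub continuousWithinAt_const) (hne hw2)
    · intro w hw
      have hw1 : r' ≤ ‖w‖ := by
        have := hw.1.2; rw [mem_closedBall_zero_iff] at this; exact (not_le.1 this).le
      have hw2 : ‖w‖ ≤ r := (mem_ball_zero_iff.1 hw.1.1).le
      have hws : w ∈ s := mem_s (har'.trans_le hw1) (hw2.trans hrR.le)
      exact (hFzw hzs hws).div (differentiableAt_id.sub_const _) (hne hw2)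
  -- assemble
  have swapcont : ∀ {r₁ r₂ : ℝ}, a < r₁ → r₁ ≤ R → a < r₂ → r₂ ≤ R → r₁ ≠ r₂ →
      ContinuousOn (fun p : ℂ × ℂ => F p.2 p.1 / (p.1 - p.2))
        (Metric.sphere (0:ℂ) r₁ ×ˢ Metric.sphere (0:ℂ) r₂) := by
    intro r₁ r₂ h1 h1' h2 h2' hne
    exact (hGcont h2 h2' h1 h1' hne.symm).comp continuous_swap.continuousOn
      fun p hp => ⟨hp.2, hp.1⟩
  have hkey : (∮ z in C(0, r), ∮ w in C(0, R), F z w / (w - z))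
      = (∮ w in C(0, r), ∮ z in C(0, R), F z w / (w - z))
        + (2 * ↑π * I) * ∮ z in C(0, r), F z z := by
    calc (∮ z in C(0, r), ∮ w in C(0, R), F z w / (w - z))
        = ∮ z in C(0, r), ((∮ w in C(0, r'), F z w / (w - z)) + (2 * ↑π * I) * F z z) :=
          circleIntegral.integral_congr h0r.le fun z hz => hres z hz
      _ = (∮ z in C(0, r), ∮ w in C(0, r'), F z w / (w - z))
            + (2 * ↑π * I) * ∮ z in C(0, r), F z z := by
          rw [circleIntegral_add' hA hB, circleIntegral.integral_const_mul]
      _ = (∮ w in C(0, r'), ∮ z in C(0, r), F z w / (w - z))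
            + (2 * ↑π * I) * ∮ z in C(0, r), F z z := by
          rw [circle_fubini h0r.le h0r'.le (hGcont har hrR.le har' hr'R.le hr'r.ne')]
      _ = (∮ w in C(0, r'), ∮ z in C(0, R), F z w / (w - z))
            + (2 * ↑π * I) * ∮ z in C(0, r), F z z := by
          rw [circleIntegral.integral_congr h0r'.le fun w hw => hdef1 w hw]
      _ = (∮ z in C(0, R), ∮ w in C(0, r'), F z w / (w - z))
            + (2 * ↑π * I) * ∮ z in C(0, r), F z z := by
          rw [circle_fubini h0r'.le h0R.le
            (swapcont har' hr'R.le (har.trans hrR) le_rfl (hr'R.ne))]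
      _ = (∮ z in C(0, R), ∮ w in C(0, r), F z w / (w - z))
            + (2 * ↑π * I) * ∮ z in C(0, r), F z z := by
          rw [circleIntegral.integral_congr h0R.le fun z hz => hdef2 z hz]
      _ = (∮ w in C(0, r), ∮ z in C(0, R), F z w / (w - z))
            + (2 * ↑π * I) * ∮ z in C(0, r), F z z := by
          rw [circle_fubini h0R.le h0r.le
            (hGcont (har.trans hrR) le_rfl har hrR.le (hrR.ne'))]
  rw [hkey]
  have h2pi : (2 * (π:ℂ) * I) ≠ 0 := by
    simp [Real.pi_ne_zero, Complex.I_ne_zero, Complex.ofReal_ne_zero]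
  field_simp
end

section
/- The double-contour kernel K^{(1)}_{k,ℓ}(0) := ((−1)^{k+ℓ}/(2πi)²) ∮_{|u|=ρ} du ∮_{|v|=1/ρ} dv (u^ℓ/v^{k+1}) (1/(v−u)) φ_a(2n,u)/φ_a(2n,v), with a < ρ < 1, admits the series representation K^{(1)}_{k,ℓ}(0) = Σ_{α=0}^∞ g^{(1)}_{ℓ+α}(n) g^{(2)}_{k+α}(n). -/
open Complex MeasureTheory

/-- `φ_a(2n;z) = (1+az)^n (1−a/z)^{n+1}`. -/
noncomputable def phiA (a : ℝ) (n : ℕ) (z : ℂ) : ℂ :=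
  (1 + (a : ℂ) * z) ^ n * (1 - (a : ℂ) / z) ^ (n + 1)

/-- `g^{(1)}_ℓ(n) = −(1/2πi)∮_{Γ_0} (−u)^ℓ φ_a(2n;u) du`, the contour a small circle
around `0` (radius `a/2`) not enclosing `a`. -/
noncomputable def gOne (a : ℝ) (n : ℕ) (ℓ : ℤ) : ℂ :=
  -(2 * Real.pi * Complex.I)⁻¹ * ∮ u in C(0, a / 2), (-u) ^ ℓ * phiA a n u

/-- `g^{(2)}_ℓ(n) = −(1/2πi)∮_{Γ_{0,a}} (−u)^{−ℓ−2} / φ_a(2n;u) du`, the contour a circle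
around `0` of radius `(1+a)/2` enclosing `0` and `a`. -/
noncomputable def gTwo (a : ℝ) (n : ℕ) (ℓ : ℤ) : ℂ :=
  -(2 * Real.pi * Complex.I)⁻¹ * ∮ u in C(0, (1 + a) / 2), (-u) ^ (-ℓ - 2) / phiA a n u

/-- The double-contour kernel `K^{(1)}_{k,ℓ}(0)`, with inner contour of radius `ρ` and
outer contour of radius `1/ρ`, `a < ρ < 1`. -/
noncomputable def KOneZero (a ρ : ℝ) (n : ℕ) (k ℓ : ℤ) : ℂ :=
  (-1 : ℂ) ^ (k + ℓ) / (2 * Real.pi * Complex.I) ^ 2 *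
    ∮ u in C(0, ρ), ∮ v in C(0, ρ⁻¹),
      u ^ ℓ / v ^ (k + 1) * (v - u)⁻¹ * (phiA a n u / phiA a n v)

lemma phi_diff {a : ℝ} {n : ℕ} {z : ℂ} (hz : z ≠ 0) : DifferentiableAt ℂ (phiA a n) z := by
  unfold phiA
  exact (((differentiableAt_const _).add ((differentiableAt_const _).mul differentiableAt_id)).pow n).mul
    (((differentiableAt_const _).sub ((differentiableAt_const _).div differentiableAt_id hz)).pow (n+1))

lemma phi_ne_zero {a : ℝ} {n : ℕ} (ha0 : 0 < a) {z : ℂ} (h1 : a < ‖z‖)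
    (h2 : ‖z‖ < a⁻¹) : phiA a n z ≠ 0 := by
  have hz : z ≠ 0 := by
    intro h; rw [h] at h1; simp at h1; linarith
  have hb1 : ‖(a:ℂ) * z‖ < 1 := by
    rw [norm_mul, Complex.norm_of_nonneg ha0.le]
    calc a * ‖z‖ < a * a⁻¹ := by apply mul_lt_mul_of_pos_left h2 ha0
    _ = 1 := mul_inv_cancel₀ ha0.ne'
  have hb2 : ‖(a:ℂ) / z‖ < 1 := by
    rw [norm_div, Complex.norm_of_nonneg ha0.le, div_lt_one (norm_pos_iff.mpr hz)]
    exact h1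
  apply mul_ne_zero
  · apply pow_ne_zero; intro h
    have : (a:ℂ) * z = -1 := by linear_combination h
    rw [this] at hb1; simp at hb1
  · apply pow_ne_zero; intro h
    have : (a:ℂ) / z = 1 := by linear_combination -h
    rw [this] at hb2; simp at hb2

lemma neg_zpow' (z : ℂ) (m : ℤ) : (-z) ^ m = (-1) ^ m * z ^ m := by
  rw [← neg_one_mul, mul_zpow]

lemma neg_one_zpow_congr {m l : ℤ} (h : Even (m - l)) : ((-1 : ℂ)) ^ m = (-1) ^ l := by
  have h1 : ((-1:ℂ)) ^ (m - l) = 1 := h.neg_one_zpow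
  have : ((-1:ℂ)) ^ m = (-1) ^ (m - l) * (-1) ^ l := by
    rw [← zpow_add₀ (by norm_num : (-1:ℂ) ≠ 0)]; ring_nf
  rw [this, h1, one_mul]

noncomputable def cOne (a ρ : ℝ) (n : ℕ) (ℓ : ℤ) (α : ℕ) : ℂ :=
  ∮ u in C(0, ρ), u ^ (ℓ + (α:ℤ)) * phiA a n u
noncomputable def cTwo (a ρ : ℝ) (n : ℕ) (k : ℤ) (α : ℕ) : ℂ :=
  ∮ v in C(0, ρ⁻¹), v ^ (-(k + (α:ℤ)) - 2) / phiA a n v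

lemma gOne_radius (a ρ : ℝ) (n : ℕ) (m : ℤ) (ha0 : 0 < a) (haρ : a < ρ) :
    (∮ u in C(0, a / 2), (-u) ^ m * phiA a n u) = ∮ u in C(0, ρ), (-u) ^ m * phiA a n u := by
  symm
  apply circleIntegral_eq_of_differentiable_on_annulus_off_countable (by linarith : (0:ℝ) < a/2)
    (by linarith) Set.countable_empty
  · intro z hz
    have hz0 : z ≠ 0 := by
      intro h
      have h2 := hz.2
      apply h2; rw [h]; simp [Metric.mem_ball]; linarith
    exact (((differentiableAt_zpow.2 (Or.inl (neg_ne_zero.2 hz0))).comp z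
      (differentiableAt_id.neg)).mul (phi_diff hz0)).continuousAt.continuousWithinAt
  · intro z hz
    have hz0 : z ≠ 0 := by
      intro h
      have h2 := hz.1.2
      apply h2; rw [h]; simp [Metric.mem_closedBall]; linarith
    exact ((differentiableAt_zpow.2 (Or.inl (neg_ne_zero.2 hz0))).comp z
      (differentiableAt_id.neg)).mul (phi_diff hz0)

lemma gTwo_radius (a ρ : ℝ) (n : ℕ) (m : ℤ) (ha0 : 0 < a) (haρ : a < ρ) (hρ1 : ρ < 1) :
    (∮ v in C(0, (1 + a) / 2), (-v) ^ (-m - 2) / phiA a n v)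
      = ∮ v in C(0, ρ⁻¹), (-v) ^ (-m - 2) / phiA a n v := by
  have hρ0 : (0:ℝ) < ρ := lt_trans ha0 haρ
  have h1ρ : (1:ℝ) < ρ⁻¹ := (one_lt_inv₀ hρ0).mpr hρ1
  have hainv : ρ⁻¹ < a⁻¹ := by
    rw [inv_lt_inv₀ hρ0 ha0]; exact haρ
  have key : ∀ z : ℂ, (1+a)/2 ≤ ‖z‖ → ‖z‖ < a⁻¹ →
      DifferentiableAt ℂ (fun v : ℂ => (-v) ^ (-m - 2) / phiA a n v) z := by
    intro z hlo hhi
    have h1 : a < ‖z‖ := by linarith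
    have hz0 : z ≠ 0 := by
      intro h; rw [h] at h1; simp at h1; linarith
    exact ((differentiableAt_zpow.2 (Or.inl (neg_ne_zero.2 hz0))).comp z
      differentiableAt_id.neg).div (phi_diff hz0) (phi_ne_zero ha0 h1 hhi)
  symm
  apply circleIntegral_eq_of_differentiable_on_annulus_off_countable
    (by linarith : (0:ℝ) < (1+a)/2) (by linarith) Set.countable_empty
  · intro z hz
    have hd1 := hz.1; have hd2 := hz.2
    rw [Metric.mem_closedBall, Complex.dist_eq, sub_zero] at hd1
    rw [Metric.mem_ball, Complex.dist_eq, sub_zero, not_lt] at hd2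
    exact (key z hd2 (lt_of_le_of_lt hd1 hainv)).continuousAt.continuousWithinAt
  · intro z hz
    have hd1 := hz.1.1; have hd2 := hz.1.2
    rw [Metric.mem_ball, Complex.dist_eq, sub_zero] at hd1
    rw [Metric.mem_closedBall, Complex.dist_eq, sub_zero, not_le] at hd2
    exact key z hd2.le (lt_trans hd1 hainv)

lemma key_inner (a ρ : ℝ) (ha0 : 0 < a) (haρ : a < ρ) (hρ1 : ρ < 1) (n : ℕ) (k ℓ : ℤ)
    {u : ℂ} (hu : u ∈ Metric.sphere (0:ℂ) ρ) :
    HasSum (fun α : ℕ => u ^ (ℓ + (α:ℤ)) * phiA a n u * cTwo a ρ n k α)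
      (∮ v in C(0, ρ⁻¹), u ^ ℓ / v ^ (k + 1) * (v - u)⁻¹ * (phiA a n u / phiA a n v)) := by
  have hρ0 : (0:ℝ) < ρ := lt_trans ha0 haρ
  have h1ρ : (1:ℝ) < ρ⁻¹ := (one_lt_inv₀ hρ0).mpr hρ1
  have hainv : ρ⁻¹ < a⁻¹ := by rw [inv_lt_inv₀ hρ0 ha0]; exact haρ
  have habs_u : ‖u‖ = ρ := by
    rw [Metric.mem_sphere, Complex.dist_eq, sub_zero] at hu; exact hu
  have hu0 : u ≠ 0 := by
    intro h; rw [h] at habs_u; simp at habs_u; linarith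
  have hsph : ∀ z : ℂ, z ∈ Metric.sphere (0:ℂ) ρ⁻¹ → z ≠ 0 ∧ phiA a n z ≠ 0 := by
    intro z hz
    rw [Metric.mem_sphere, Complex.dist_eq, sub_zero] at hz
    have hz0 : z ≠ 0 := by intro h; rw [h] at hz; simp at hz; linarith
    exact ⟨hz0, phi_ne_zero ha0 (by rw [hz]; linarith) (by rw [hz]; exact hainv)⟩
  set f : ℂ → ℂ := fun v => v ^ (-(k+1)) * (u ^ ℓ * phiA a n u / phiA a n v) with hf_def
  have hf : CircleIntegrable f 0 ρ⁻¹ := by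
    apply ContinuousOn.circleIntegrable (by positivity)
    intro z hz
    obtain ⟨hz0, hφ⟩ := hsph z hz
    exact ((continuousAt_zpow₀ _ _ (Or.inl hz0)).mul
      (continuousAt_const.div (phi_diff hz0).continuousAt hφ)).continuousWithinAt
  have hw : ‖u‖ < ρ⁻¹ := by rw [habs_u]; linarith
  have H := hasSum_two_pi_I_cauchyPowerSeries_integral hf hw
  rw [zero_add] at H
  have hterm : ∀ α : ℕ,
      (∮ z in C(0, ρ⁻¹), (u / (z - 0)) ^ α • (z - 0)⁻¹ • f z)
        = u ^ (ℓ + (α:ℤ)) * phiA a n u * cTwo a ρ n k α := by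
    intro α
    have : (∮ z in C(0, ρ⁻¹), (u / (z - 0)) ^ α • (z - 0)⁻¹ • f z)
        = ∮ z in C(0, ρ⁻¹), (u ^ (ℓ + (α:ℤ)) * phiA a n u) • (z ^ (-(k + (α:ℤ)) - 2) / phiA a n z) := by
      apply circleIntegral.integral_congr (by positivity)
      intro z hz
      obtain ⟨hz0, hφ⟩ := hsph z hz
      simp only [sub_zero, smul_eq_mul, hf_def]
      have h1 : u ^ (ℓ + (α:ℤ)) = u ^ ℓ * u ^ α := by rw [zpow_add₀ hu0, zpow_natCast]
      have e : z ^ (-((α:ℤ)+1)) = (z^α * z)⁻¹ := by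
        rw [zpow_neg, zpow_add_one₀ hz0, zpow_natCast]
      have h2 : z ^ (-(k + (α:ℤ)) - 2) = z ^ (-(k+1)) * (z^α * z)⁻¹ := by
        rw [show (-(k + (α:ℤ)) - 2) = (-(k+1)) + (-((α:ℤ)+1)) by ring, zpow_add₀ hz0, e]
      rw [h1, h2, div_pow]
      field_simp
    rw [this, circleIntegral.integral_smul, smul_eq_mul, cTwo]
  have hsum : (∮ z in C(0, ρ⁻¹), (z - u)⁻¹ • f z)
      = ∮ v in C(0, ρ⁻¹), u ^ ℓ / v ^ (k + 1) * (v - u)⁻¹ * (phiA a n u / phiA a n v) := by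
    apply circleIntegral.integral_congr (by positivity)
    intro z hz
    simp only [smul_eq_mul, hf_def]
    rw [zpow_neg]
    ring
  rw [hsum] at H
  simpa only [hterm] using H

lemma key_outer (a ρ : ℝ) (ha0 : 0 < a) (haρ : a < ρ) (hρ1 : ρ < 1) (n : ℕ) (k ℓ : ℤ) :
    (∮ u in C(0, ρ), ∮ v in C(0, ρ⁻¹),
        u ^ ℓ / v ^ (k + 1) * (v - u)⁻¹ * (phiA a n u / phiA a n v))
      = ∑' α : ℕ, cOne a ρ n ℓ α * cTwo a ρ n k α := by
  have hρ0 : (0:ℝ) < ρ := lt_trans ha0 haρ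
  have h1ρ : (1:ℝ) < ρ⁻¹ := (one_lt_inv₀ hρ0).mpr hρ1
  have hainv : ρ⁻¹ < a⁻¹ := by rw [inv_lt_inv₀ hρ0 ha0]; exact haρ
  have hsph2 : ∀ z : ℂ, z ∈ Metric.sphere (0:ℂ) ρ⁻¹ → z ≠ 0 ∧ phiA a n z ≠ 0 := by
    intro z hz
    rw [Metric.mem_sphere, Complex.dist_eq, sub_zero] at hz
    have hz0 : z ≠ 0 := by intro h; rw [h] at hz; simp at hz; linarith
    exact ⟨hz0, phi_ne_zero ha0 (by rw [hz]; linarith) (by rw [hz]; exact hainv)⟩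
  have hsph1 : ∀ z : ℂ, z ∈ Metric.sphere (0:ℂ) ρ → z ≠ 0 := by
    intro z hz
    rw [Metric.mem_sphere, Complex.dist_eq, sub_zero] at hz
    intro h; rw [h] at hz; simp at hz; linarith
  -- bounds
  obtain ⟨M2, hM2⟩ := (isCompact_sphere (0:ℂ) ρ⁻¹).exists_bound_of_continuousOn
    (f := fun v => (phiA a n v)⁻¹) (fun z hz => (((phi_diff (hsph2 z hz).1).continuousAt).inv₀
      (hsph2 z hz).2).continuousWithinAt)
  obtain ⟨M1, hM1⟩ := (isCompact_sphere (0:ℂ) ρ).exists_bound_of_continuousOn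
    (f := fun v => phiA a n v) (fun z hz => ((phi_diff (hsph1 z hz)).continuousAt).continuousWithinAt)
  set M2' := max M2 0 with hM2'def
  set M1' := max M1 0 with hM1'def
  have hM2'0 : 0 ≤ M2' := le_max_right _ _
  have hM1'0 : 0 ≤ M1' := le_max_right _ _
  set C2 : ℝ := 2 * Real.pi * ρ⁻¹ * (ρ ^ ((k:ℤ) + 2) * M2') with hC2def
  have hC20 : 0 ≤ C2 := by positivity
  have hc2 : ∀ α : ℕ, ‖cTwo a ρ n k α‖ ≤ C2 * ρ ^ α := by
    intro α
    have hb : ∀ z ∈ Metric.sphere (0:ℂ) ρ⁻¹,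
        ‖z ^ (-(k + (α:ℤ)) - 2) / phiA a n z‖ ≤ ρ ^ ((k:ℤ) + 2) * M2' * ρ ^ α := by
      intro z hz
      obtain ⟨hz0, hφ⟩ := hsph2 z hz
      have hzabs : ‖z‖ = ρ⁻¹ := by
        rw [Metric.mem_sphere, Complex.dist_eq, sub_zero] at hz
        rw [hz]
      rw [div_eq_mul_inv, norm_mul, norm_zpow, hzabs, inv_zpow', 
        show (-(-(k + (α:ℤ)) - 2)) = ((k:ℤ) + 2) + (α:ℤ) by ring, zpow_add₀ hρ0.ne',
        zpow_natCast]
      have : ‖(phiA a n z)⁻¹‖ ≤ M2' := le_trans (hM2 z hz) (le_max_left _ _)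
      calc ρ ^ ((k:ℤ)+2) * ρ ^ α * ‖(phiA a n z)⁻¹‖ ≤ ρ ^ ((k:ℤ)+2) * ρ ^ α * M2' := by
            gcongr
        _ = ρ ^ ((k:ℤ)+2) * M2' * ρ ^ α := by ring
    calc ‖cTwo a ρ n k α‖ ≤ 2 * Real.pi * ρ⁻¹ * (ρ ^ ((k:ℤ)+2) * M2' * ρ ^ α) :=
          circleIntegral.norm_integral_le_of_norm_le_const (by positivity) hb
      _ = C2 * ρ ^ α := by rw [hC2def]; ring
  -- continuity of the terms
  have hcontF : ∀ α : ℕ, ContinuousOn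
      (fun u : ℂ => (u ^ (ℓ + (α:ℤ)) * phiA a n u) • cTwo a ρ n k α) (Metric.sphere (0:ℂ) ρ) := by
    intro α
    apply ContinuousOn.fun_smul _ continuousOn_const
    intro z hz
    exact ((continuousAt_zpow₀ _ _ (Or.inl (hsph1 z hz))).mul
      (phi_diff (hsph1 z hz)).continuousAt).continuousWithinAt
  set D : ℝ := ρ ^ ℓ * M1' * C2 with hDdef
  have hρsq : ρ ^ 2 < 1 := by nlinarith
  have Houter : HasSum (fun α : ℕ => ∮ u in C(0, ρ),
        (u ^ (ℓ + (α:ℤ)) * phiA a n u) • cTwo a ρ n k α)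
      (∮ u in C(0, ρ), ∮ v in C(0, ρ⁻¹),
        u ^ ℓ / v ^ (k + 1) * (v - u)⁻¹ * (phiA a n u / phiA a n v)) := by
    refine intervalIntegral.hasSum_integral_of_dominated_convergence
      (fun α θ => ρ * (D * (ρ ^ 2) ^ α)) (fun α => ?_) (fun α => ?_) ?_ ?_ ?_
    · simp only [deriv_circleMap]
      exact (((continuous_circleMap 0 ρ).mul continuous_const).smul
        ((hcontF α).comp_continuous (continuous_circleMap 0 ρ)
          (fun θ => circleMap_mem_sphere 0 hρ0.le θ))).aestronglyMeasurable
    · refine Filter.Eventually.of_forall fun θ _ => ?_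
      have h1 : ‖phiA a n (circleMap 0 ρ θ)‖ ≤ M1' :=
        le_trans (hM1 _ (circleMap_mem_sphere 0 hρ0.le θ)) (le_max_left _ _)
      have h2 := hc2 α
      simp only [norm_smul, deriv_circleMap, norm_mul, norm_zpow, Complex.norm_I, mul_one,
        norm_circleMap_zero, abs_of_pos hρ0] at h1 h2 ⊢
      apply mul_le_mul_of_nonneg_left _ hρ0.le
      refine le_trans (mul_le_mul (mul_le_mul_of_nonneg_left h1 (by positivity)) h2
        (norm_nonneg _) (by positivity)) (le_of_eq ?_)
      rw [hDdef, zpow_add₀ hρ0.ne', zpow_natCast]; ring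
    · exact Filter.Eventually.of_forall fun θ _ =>
        ((summable_geometric_of_lt_one (by positivity) hρsq).mul_left D).mul_left ρ
    · exact intervalIntegrable_const
    · refine Filter.Eventually.of_forall fun θ _ => ?_
      have := (key_inner a ρ ha0 haρ hρ1 n k ℓ (circleMap_mem_sphere 0 hρ0.le θ)).const_smul
        (deriv (circleMap 0 ρ) θ)
      simpa only [smul_eq_mul, mul_assoc] using this
  have hterm : ∀ α : ℕ, (∮ u in C(0, ρ), (u ^ (ℓ + (α:ℤ)) * phiA a n u) • cTwo a ρ n k α)
      = cOne a ρ n ℓ α * cTwo a ρ n k α := by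
    intro α
    rw [circleIntegral.integral_smul_const, smul_eq_mul, cOne]
  rw [← Houter.tsum_eq]
  exact tsum_congr hterm


lemma gOne_val (a ρ : ℝ) (n : ℕ) (m : ℤ) (ha0 : 0 < a) (haρ : a < ρ) :
    gOne a n m = -(2 * Real.pi * Complex.I)⁻¹ *
      ((-1 : ℂ) ^ m * ∮ u in C(0, ρ), u ^ m * phiA a n u) := by
  rw [gOne, gOne_radius a ρ n m ha0 haρ]
  congr 1
  have h : (fun u : ℂ => (-u) ^ m * phiA a n u)
      = fun u : ℂ => ((-1 : ℂ) ^ m) • (u ^ m * phiA a n u) :=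
    funext fun u => by rw [neg_zpow', smul_eq_mul, mul_assoc]
  rw [h, circleIntegral.integral_smul, smul_eq_mul]

lemma gTwo_val (a ρ : ℝ) (n : ℕ) (m : ℤ) (ha0 : 0 < a) (haρ : a < ρ) (hρ1 : ρ < 1) :
    gTwo a n m = -(2 * Real.pi * Complex.I)⁻¹ *
      ((-1 : ℂ) ^ (-m - 2) * ∮ v in C(0, ρ⁻¹), v ^ (-m - 2) / phiA a n v) := by
  rw [gTwo, gTwo_radius a ρ n m ha0 haρ hρ1]
  congr 1
  have h : (fun v : ℂ => (-v) ^ (-m - 2) / phiA a n v)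
      = fun v : ℂ => ((-1 : ℂ) ^ (-m - 2)) • (v ^ (-m - 2) / phiA a n v) :=
    funext fun v => by rw [neg_zpow', smul_eq_mul, mul_div_assoc]
  rw [h, circleIntegral.integral_smul, smul_eq_mul]

/-- The double-contour kernel `K^{(1)}_{k,ℓ}(0)` admits the series representation
`K^{(1)}_{k,ℓ}(0) = Σ_{α≥0} g^{(1)}_{ℓ+α}(n) g^{(2)}_{k+α}(n)`. -/
theorem KOneZero_eq_tsum (a ρ : ℝ) (ha0 : 0 < a) (haρ : a < ρ) (hρ1 : ρ < 1)
    (n : ℕ) (k ℓ : ℤ) :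
    KOneZero a ρ n k ℓ = ∑' α : ℕ, gOne a n (ℓ + (α : ℤ)) * gTwo a n (k + (α : ℤ)) := by
  have hg : ∀ α : ℕ, gOne a n (ℓ + (α : ℤ)) * gTwo a n (k + (α : ℤ))
      = (-1 : ℂ) ^ (k + ℓ) / (2 * Real.pi * Complex.I) ^ 2
        * (cOne a ρ n ℓ α * cTwo a ρ n k α) := by
    intro α
    rw [gOne_val a ρ n (ℓ + (α : ℤ)) ha0 haρ, gTwo_val a ρ n (k + (α : ℤ)) ha0 haρ hρ1]
    have hsign : ((-1 : ℂ)) ^ (ℓ + (α:ℤ)) * (-1) ^ (-(k + (α:ℤ)) - 2) = (-1) ^ (k + ℓ) := by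
      rw [← zpow_add₀ (by norm_num : (-1:ℂ) ≠ 0)]
      exact neg_one_zpow_congr ⟨-k - 1, by ring⟩
    simp only [cOne, cTwo]
    calc (-(2 * Real.pi * Complex.I)⁻¹ *
            ((-1 : ℂ) ^ (ℓ + (α:ℤ)) * ∮ u in C(0, ρ), u ^ (ℓ + (α:ℤ)) * phiA a n u)) *
          (-(2 * Real.pi * Complex.I)⁻¹ *
            ((-1 : ℂ) ^ (-(k + (α:ℤ)) - 2) *
              ∮ v in C(0, ρ⁻¹), v ^ (-(k + (α:ℤ)) - 2) / phiA a n v))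
        = ((2 * Real.pi * Complex.I)⁻¹ * (2 * Real.pi * Complex.I)⁻¹) *
            (((-1 : ℂ) ^ (ℓ + (α:ℤ)) * (-1 : ℂ) ^ (-(k + (α:ℤ)) - 2)) *
              ((∮ u in C(0, ρ), u ^ (ℓ + (α:ℤ)) * phiA a n u) *
                ∮ v in C(0, ρ⁻¹), v ^ (-(k + (α:ℤ)) - 2) / phiA a n v)) := by ring
      _ = _ := by rw [hsign, ← mul_inv, ← sq, div_eq_mul_inv]; ring
  rw [tsum_congr hg, tsum_mul_left, KOneZero, key_outer a ρ ha0 haρ hρ1 n k ℓ]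
end
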